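/- Let k be a field and X a type; in F := FreeAlgebra k (X ⊕ X), with plain generators x̄ and dotted generators ẋ, let φ : F → F be the unique algebra homomorphism with φ(x̄) = x̄ and φ(ẋ) = x̄, and let V be the two-sided ideal of F generated by {ẋ : x ∈ X}. Let S be a subset of V, and let J be the smallest k-submodule of F containing S such that for all j ∈ J and v ∈ V one has φ(v)·j ∈ J, j·φ(v) ∈ J, v·φ(j) ∈ J, φ(j)·v ∈ J, v·j ∈ J, and j·v ∈ J. Then J equals the intersection (as submodules of F) of V with the two-sided ideal of F generated by the set S ∪ φ(S). -/
import Mathlib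


/-- For a subset `S` of the free associative tri-algebra `V` (the two-sided ideal
of `FreeAlgebra k (X ⊕ X)` generated by the dotted generators), the tri-algebra ideal of `V`
generated by `S` equals the intersection of `V` with the two-sided ideal of the ambient free
algebra generated by `S ∪ φ(S)`. -/
theorem assoc_trialgebra_ideal_eq_inter (k : Type*) [Field k] (X : Type*)
    (φ : FreeAlgebra k (X ⊕ X) →ₐ[k] FreeAlgebra k (X ⊕ X))
    (hφl : ∀ x : X, φ (FreeAlgebra.ι k (Sum.inl x)) = FreeAlgebra.ι k (Sum.inl x))
    (hφr : ∀ x : X, φ (FreeAlgebra.ι k (Sum.inr x)) = FreeAlgebra.ι k (Sum.inl x))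
    (V : TwoSidedIdeal (FreeAlgebra k (X ⊕ X)))
    (hV : V = TwoSidedIdeal.span (Set.range fun x : X => FreeAlgebra.ι k (Sum.inr x : X ⊕ X)))
    (S : Set (FreeAlgebra k (X ⊕ X))) (hS : S ⊆ (V : Set (FreeAlgebra k (X ⊕ X)))) :
    ((sInf {J : Submodule k (FreeAlgebra k (X ⊕ X)) |
        S ⊆ (J : Set (FreeAlgebra k (X ⊕ X))) ∧
        ∀ j ∈ J, ∀ v ∈ V, φ v * j ∈ J ∧ j * φ v ∈ J ∧ v * φ j ∈ J ∧
          φ j * v ∈ J ∧ v * j ∈ J ∧ j * v ∈ J} :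
        Submodule k (FreeAlgebra k (X ⊕ X))) : Set (FreeAlgebra k (X ⊕ X))) =
      (V : Set (FreeAlgebra k (X ⊕ X))) ∩
        ((TwoSidedIdeal.span (S ∪ φ '' S)) : Set (FreeAlgebra k (X ⊕ X))) := by
  classical
  -- the projection `p` killing the dotted generators
  let p : FreeAlgebra k (X ⊕ X) →ₐ[k] FreeAlgebra k (X ⊕ X) :=
    FreeAlgebra.lift k (Sum.elim (fun x => FreeAlgebra.ι k (Sum.inl x)) (fun _ => 0))
  have hpl : ∀ x : X, p (FreeAlgebra.ι k (Sum.inl x)) = FreeAlgebra.ι k (Sum.inl x) :=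
    fun x => FreeAlgebra.lift_ι_apply _ _
  have hpr : ∀ x : X, p (FreeAlgebra.ι k (Sum.inr x)) = 0 :=
    fun x => FreeAlgebra.lift_ι_apply _ _
  have hpφ : ∀ a, p (φ a) = φ a := by
    have h : p.comp φ = φ := FreeAlgebra.hom_ext (funext fun x => by
      cases x with
      | inl x =>
        show p (φ (FreeAlgebra.ι k (Sum.inl x))) = φ (FreeAlgebra.ι k (Sum.inl x))
        rw [hφl, hpl]
      | inr x =>
        show p (φ (FreeAlgebra.ι k (Sum.inr x))) = φ (FreeAlgebra.ι k (Sum.inr x))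
        rw [hφr, hpl])
    exact fun a => AlgHom.congr_fun h a
  have hpp : ∀ a, p (p a) = p a := by
    have h : p.comp p = p := FreeAlgebra.hom_ext (funext fun x => by
      cases x with
      | inl x =>
        show p (p (FreeAlgebra.ι k (Sum.inl x))) = p (FreeAlgebra.ι k (Sum.inl x))
        rw [hpl, hpl]
      | inr x =>
        show p (p (FreeAlgebra.ι k (Sum.inr x))) = p (FreeAlgebra.ι k (Sum.inr x))
        rw [hpr, map_zero])
    exact fun a => AlgHom.congr_fun h a
  have hφφ : ∀ a, φ (φ a) = φ a := by
    have h : φ.comp φ = φ := FreeAlgebra.hom_ext (funext fun x => by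
      cases x with
      | inl x =>
        show φ (φ (FreeAlgebra.ι k (Sum.inl x))) = φ (FreeAlgebra.ι k (Sum.inl x))
        rw [hφl, hφl]
      | inr x =>
        show φ (φ (FreeAlgebra.ι k (Sum.inr x))) = φ (FreeAlgebra.ι k (Sum.inr x))
        rw [hφr, hφl])
    exact fun a => AlgHom.congr_fun h a
  -- dotted generators lie in `V`
  have hgen : ∀ x : X, FreeAlgebra.ι k (Sum.inr x) ∈ V := by
    intro x
    rw [hV]
    exact TwoSidedIdeal.subset_span ⟨x, rfl⟩
  -- `p` kills `V`
  have hVp : ∀ v ∈ V, p v = 0 := by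
    intro v hv
    rw [hV] at hv
    have h : v ∈ TwoSidedIdeal.ker p := by
      refine TwoSidedIdeal.mem_span_iff.1 hv _ ?_
      rintro _ ⟨x, rfl⟩
      rw [SetLike.mem_coe, TwoSidedIdeal.mem_ker]
      exact hpr x
    rwa [TwoSidedIdeal.mem_ker] at h
  -- `a - p a` always lies in `V`
  have hsub : ∀ a, a - p a ∈ V := by
    intro a
    induction a using FreeAlgebra.induction with
    | grade0 r => simpa using V.zero_mem
    | grade1 x =>
      cases x with
      | inl x => rw [hpl]; simpa using V.zero_mem
      | inr x => rw [hpr]; simpa using hgen x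
    | add a b ha hb =>
      have h : a + b - p (a + b) = (a - p a) + (b - p b) := by rw [map_add]; abel
      rw [h]; exact V.add_mem ha hb
    | mul a b ha hb =>
      have h : a * b - p (a * b) = a * (b - p b) + (a - p a) * p b := by
        rw [map_mul, mul_sub, sub_mul]; abel
      rw [h]; exact V.add_mem (V.mul_mem_left _ _ hb) (V.mul_mem_right _ _ ha)
  -- the decomposition of an arbitrary element
  have hdec : ∀ a : FreeAlgebra k (X ⊕ X), ∃ c v u, v ∈ V ∧ u ∈ V ∧
      a = algebraMap k _ c + φ v + u := by
    intro a
    induction a using FreeAlgebra.induction with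
    | grade0 r => exact ⟨r, 0, 0, V.zero_mem, V.zero_mem, by simp⟩
    | grade1 x =>
      cases x with
      | inl x =>
        exact ⟨0, FreeAlgebra.ι k (Sum.inr x), 0, hgen x, V.zero_mem, by simp [hφr x]⟩
      | inr x =>
        exact ⟨0, 0, FreeAlgebra.ι k (Sum.inr x), V.zero_mem, hgen x, by simp⟩
    | add a b ha hb =>
      obtain ⟨c, v, u, hv, hu, rfl⟩ := ha
      obtain ⟨c', v', u', hv', hu', rfl⟩ := hb
      exact ⟨c + c', v + v', u + u', V.add_mem hv hv', V.add_mem hu hu', by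
        rw [map_add, map_add]; abel⟩
    | mul a b ha hb =>
      obtain ⟨c, v, u, hv, hu, rfl⟩ := ha
      obtain ⟨c', v', u', hv', hu', rfl⟩ := hb
      refine ⟨c * c',
        algebraMap k _ c * v' + (v * algebraMap k _ c' + v * v'),
        algebraMap k _ c * u' + (u * algebraMap k _ c' + (φ v * u' + (u * φ v' + u * u'))),
        ?_, ?_, ?_⟩
      · exact V.add_mem (V.mul_mem_left _ _ hv')
          (V.add_mem (V.mul_mem_right _ _ hv) (V.mul_mem_right _ _ hv))
      · exact V.add_mem (V.mul_mem_left _ _ hu')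
          (V.add_mem (V.mul_mem_right _ _ hu)
            (V.add_mem (V.mul_mem_left _ _ hu')
              (V.add_mem (V.mul_mem_right _ _ hu) (V.mul_mem_right _ _ hu))))
      · simp only [map_add, map_mul, AlgHom.commutes]
        noncomm_ring
  -- the defining collection of submodules
  let 𝒮 : Set (Submodule k (FreeAlgebra k (X ⊕ X))) :=
    {J : Submodule k (FreeAlgebra k (X ⊕ X)) |
        S ⊆ (J : Set (FreeAlgebra k (X ⊕ X))) ∧
        ∀ j ∈ J, ∀ v ∈ V, φ v * j ∈ J ∧ j * φ v ∈ J ∧ v * φ j ∈ J ∧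
          φ j * v ∈ J ∧ v * j ∈ J ∧ j * v ∈ J}
  have h𝒮self : sInf 𝒮 ∈ 𝒮 := by
    constructor
    · intro s hs
      rw [SetLike.mem_coe, Submodule.mem_sInf]
      exact fun J hJ => hJ.1 hs
    · intro j hj v hv
      have hj' : ∀ J ∈ 𝒮, j ∈ J := Submodule.mem_sInf.1 hj
      exact ⟨Submodule.mem_sInf.2 fun J hJ => (hJ.2 j (hj' J hJ) v hv).1,
        Submodule.mem_sInf.2 fun J hJ => (hJ.2 j (hj' J hJ) v hv).2.1,
        Submodule.mem_sInf.2 fun J hJ => (hJ.2 j (hj' J hJ) v hv).2.2.1,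
        Submodule.mem_sInf.2 fun J hJ => (hJ.2 j (hj' J hJ) v hv).2.2.2.1,
        Submodule.mem_sInf.2 fun J hJ => (hJ.2 j (hj' J hJ) v hv).2.2.2.2.1,
        Submodule.mem_sInf.2 fun J hJ => (hJ.2 j (hj' J hJ) v hv).2.2.2.2.2⟩
  obtain ⟨hJS, hJcl⟩ := h𝒮self
  -- `sInf 𝒮 ⊆ V`
  let V' : Submodule k (FreeAlgebra k (X ⊕ X)) :=
    { carrier := (V : Set (FreeAlgebra k (X ⊕ X))),
      add_mem' := fun h1 h2 => V.add_mem h1 h2,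
      zero_mem' := V.zero_mem,
      smul_mem' := fun c x hx => by
        rw [SetLike.mem_coe, Algebra.smul_def]
        exact V.mul_mem_left _ _ hx }
  have hJV : ∀ j ∈ sInf 𝒮, j ∈ V := by
    intro j hj
    have hV'𝒮 : V' ∈ 𝒮 := by
      refine ⟨hS, ?_⟩
      intro j hj v hv
      exact ⟨V.mul_mem_left _ _ hj, V.mul_mem_right _ _ hj, V.mul_mem_right _ _ hv,
        V.mul_mem_left _ _ hv, V.mul_mem_left _ _ hj, V.mul_mem_right _ _ hj⟩
    exact Submodule.mem_sInf.1 hj _ hV'𝒮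
  -- `sInf 𝒮` absorbs multiplication by arbitrary elements
  have hJabs : ∀ j ∈ sInf 𝒮, ∀ a, a * j ∈ sInf 𝒮 ∧ j * a ∈ sInf 𝒮 := by
    intro j hj a
    obtain ⟨c, v, u, hv, hu, rfl⟩ := hdec a
    constructor
    · have h1 : (algebraMap k _ c + φ v + u) * j = c • j + (φ v * j + u * j) := by
        rw [Algebra.smul_def]; noncomm_ring
      rw [h1]
      exact Submodule.add_mem _ (Submodule.smul_mem _ _ hj)
        (Submodule.add_mem _ (hJcl j hj v hv).1 (hJcl j hj u hu).2.2.2.2.1)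
    · have h1 : j * (algebraMap k _ c + φ v + u) = c • j + (j * φ v + j * u) := by
        rw [Algebra.smul_def, Algebra.commutes]; noncomm_ring
      rw [h1]
      exact Submodule.add_mem _ (Submodule.smul_mem _ _ hj)
        (Submodule.add_mem _ (hJcl j hj v hv).2.1 (hJcl j hj u hu).2.2.2.2.2)
  -- the submodule of "plain" parts of the ideal generated by `φ '' S`
  let N : Submodule k (FreeAlgebra k (X ⊕ X)) :=
    Submodule.span k {x | ∃ a s b, s ∈ S ∧ x = p a * (φ s * p b)}
  have hNp : ∀ n ∈ N, p n = n := by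
    intro n hn
    induction hn using Submodule.span_induction with
    | mem x hx =>
      obtain ⟨a, s, b, hs, rfl⟩ := hx
      rw [map_mul, map_mul, hpp, hpφ, hpp]
    | zero => simp
    | add x y _ _ hx hy => rw [map_add, hx, hy]
    | smul c x _ hx => rw [map_smul, hx]
  have hNl : ∀ n ∈ N, ∀ a, p a * n ∈ N := by
    intro n hn
    induction hn using Submodule.span_induction with
    | mem x hx =>
      obtain ⟨a', s, b, hs, rfl⟩ := hx
      intro a
      have h : p a * (p a' * (φ s * p b)) = p (a * a') * (φ s * p b) := by
        rw [map_mul, mul_assoc]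
      rw [h]
      exact Submodule.subset_span ⟨a * a', s, b, hs, rfl⟩
    | zero => intro a; rw [mul_zero]; exact Submodule.zero_mem _
    | add x y _ _ hx hy => intro a; rw [mul_add]; exact Submodule.add_mem _ (hx a) (hy a)
    | smul c x _ hx => intro a; rw [mul_smul_comm]; exact Submodule.smul_mem _ _ (hx a)
  have hNr : ∀ n ∈ N, ∀ b, n * p b ∈ N := by
    intro n hn
    induction hn using Submodule.span_induction with
    | mem x hx =>
      obtain ⟨a, s, b', hs, rfl⟩ := hx
      intro b
      have h : p a * (φ s * p b') * p b = p a * (φ s * p (b' * b)) := by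
        rw [map_mul, mul_assoc, mul_assoc]
      rw [h]
      exact Submodule.subset_span ⟨a, s, b' * b, hs, rfl⟩
    | zero => intro b; rw [zero_mul]; exact Submodule.zero_mem _
    | add x y _ _ hx hy => intro b; rw [add_mul]; exact Submodule.add_mem _ (hx b) (hy b)
    | smul c x _ hx => intro b; rw [smul_mul_assoc]; exact Submodule.smul_mem _ _ (hx b)
  -- products of `V` with `N` land in `sInf 𝒮`
  have hVN : ∀ n ∈ N, ∀ v ∈ V, v * n ∈ sInf 𝒮 := by
    intro n hn
    induction hn using Submodule.span_induction with
    | mem x hx =>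
      obtain ⟨a, s, b, hs, rfl⟩ := hx
      intro v hv
      have h : v * (p a * (φ s * p b)) = ((v * p a) * φ s) * p b := by noncomm_ring
      rw [h]
      refine (hJabs _ ?_ (p b)).2
      exact (hJcl s (hJS hs) (v * p a) (V.mul_mem_right _ _ hv)).2.2.1
    | zero => intro v hv; rw [mul_zero]; exact Submodule.zero_mem _
    | add x y _ _ hx hy =>
      intro v hv; rw [mul_add]; exact Submodule.add_mem _ (hx v hv) (hy v hv)
    | smul c x _ hx =>
      intro v hv; rw [mul_smul_comm]; exact Submodule.smul_mem _ _ (hx v hv)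
  have hNV : ∀ n ∈ N, ∀ v ∈ V, n * v ∈ sInf 𝒮 := by
    intro n hn
    induction hn using Submodule.span_induction with
    | mem x hx =>
      obtain ⟨a, s, b, hs, rfl⟩ := hx
      intro v hv
      have h : (p a * (φ s * p b)) * v = p a * (φ s * (p b * v)) := by noncomm_ring
      rw [h]
      refine (hJabs _ ?_ (p a)).1
      exact (hJcl s (hJS hs) (p b * v) (V.mul_mem_left _ _ hv)).2.2.2.1
    | zero => intro v hv; rw [zero_mul]; exact Submodule.zero_mem _
    | add x y _ _ hx hy =>
      intro v hv; rw [add_mul]; exact Submodule.add_mem _ (hx v hv) (hy v hv)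
    | smul c x _ hx =>
      intro v hv; rw [smul_mul_assoc]; exact Submodule.smul_mem _ _ (hx v hv)
  -- the auxiliary two-sided ideal
  let Dcar : Set (FreeAlgebra k (X ⊕ X)) := {f | f - p f ∈ sInf 𝒮 ∧ p f ∈ N}
  have Dzero : (0 : FreeAlgebra k (X ⊕ X)) ∈ Dcar :=
    ⟨by simpa using Submodule.zero_mem _, by simpa using Submodule.zero_mem _⟩
  have Dadd : ∀ {x y : FreeAlgebra k (X ⊕ X)}, x ∈ Dcar → y ∈ Dcar → x + y ∈ Dcar := by
    intro x y hx hy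
    refine ⟨?_, ?_⟩
    · have h : x + y - p (x + y) = (x - p x) + (y - p y) := by rw [map_add]; abel
      rw [h]; exact Submodule.add_mem _ hx.1 hy.1
    · rw [map_add]; exact Submodule.add_mem _ hx.2 hy.2
  have Dneg : ∀ {x : FreeAlgebra k (X ⊕ X)}, x ∈ Dcar → -x ∈ Dcar := by
    intro x hx
    refine ⟨?_, ?_⟩
    · have h : -x - p (-x) = -(x - p x) := by rw [map_neg]; abel
      rw [h]; exact Submodule.neg_mem _ hx.1
    · rw [map_neg]; exact Submodule.neg_mem _ hx.2
  have Dml : ∀ {x y : FreeAlgebra k (X ⊕ X)}, y ∈ Dcar → x * y ∈ Dcar := by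
    intro x y hy
    refine ⟨?_, ?_⟩
    · have h : x * y - p (x * y) = x * (y - p y) + (x - p x) * p y := by
        rw [map_mul, mul_sub, sub_mul]; abel
      rw [h]
      exact Submodule.add_mem _ (hJabs _ hy.1 x).1 (hVN _ hy.2 _ (hsub x))
    · rw [map_mul]; exact hNl _ hy.2 x
  have Dmr : ∀ {x y : FreeAlgebra k (X ⊕ X)}, x ∈ Dcar → x * y ∈ Dcar := by
    intro x y hx
    refine ⟨?_, ?_⟩
    · have h : x * y - p (x * y) = (x - p x) * y + p x * (y - p y) := by
        rw [map_mul, sub_mul, mul_sub]; abel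
      rw [h]
      exact Submodule.add_mem _ (hJabs _ hx.1 y).2 (hNV _ hx.2 _ (hsub y))
    · rw [map_mul]; exact hNr _ hx.2 y
  let D : TwoSidedIdeal (FreeAlgebra k (X ⊕ X)) :=
    TwoSidedIdeal.mk' Dcar Dzero Dadd Dneg Dml Dmr
  have hDmem : ∀ f, f ∈ D ↔ f ∈ Dcar := fun f =>
    TwoSidedIdeal.mem_mk' Dcar Dzero Dadd Dneg Dml Dmr f
  have hSD : S ∪ φ '' S ⊆ (D : Set (FreeAlgebra k (X ⊕ X))) := by
    rintro t (ht | ⟨s, hs, rfl⟩)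
    · rw [SetLike.mem_coe, hDmem]
      have hp0 : p t = 0 := hVp t (hS ht)
      exact ⟨by rw [hp0, sub_zero]; exact hJS ht, by rw [hp0]; exact Submodule.zero_mem _⟩
    · rw [SetLike.mem_coe, hDmem]
      refine ⟨by rw [hpφ, sub_self]; exact Submodule.zero_mem _, ?_⟩
      rw [hpφ]
      have h : φ s = p 1 * (φ s * p 1) := by rw [map_one, one_mul, mul_one]
      rw [h]
      exact Submodule.subset_span ⟨1, s, 1, hs, rfl⟩
  -- the hard inclusion
  have hhard : ∀ f, f ∈ V → f ∈ TwoSidedIdeal.span (S ∪ φ '' S) → f ∈ sInf 𝒮 := by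
    intro f hfV hfI
    have hfD : f ∈ Dcar := (hDmem f).1 (TwoSidedIdeal.mem_span_iff.1 hfI D hSD)
    have h := hfD.1
    rwa [hVp f hfV, sub_zero] at h
  -- `φ` preserves the span
  have hφI : ∀ x ∈ TwoSidedIdeal.span (S ∪ φ '' S), φ x ∈ TwoSidedIdeal.span (S ∪ φ '' S) := by
    intro x hx
    have h := TwoSidedIdeal.mem_span_iff.1 hx
      (TwoSidedIdeal.comap φ (TwoSidedIdeal.span (S ∪ φ '' S))) ?_
    · rwa [TwoSidedIdeal.mem_comap] at h
    · rintro t (ht | ⟨s, hs, rfl⟩)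
      · rw [SetLike.mem_coe, TwoSidedIdeal.mem_comap]
        exact TwoSidedIdeal.subset_span (Or.inr ⟨t, ht, rfl⟩)
      · rw [SetLike.mem_coe, TwoSidedIdeal.mem_comap, hφφ]
        exact TwoSidedIdeal.subset_span (Or.inr ⟨s, hs, rfl⟩)
  -- the easy inclusion: the intersection is one of the submodules in `𝒮`
  let M : Submodule k (FreeAlgebra k (X ⊕ X)) :=
    { carrier := {f | f ∈ V ∧ f ∈ TwoSidedIdeal.span (S ∪ φ '' S)},
      add_mem' := fun h1 h2 =>
        ⟨V.add_mem h1.1 h2.1, (TwoSidedIdeal.span (S ∪ φ '' S)).add_mem h1.2 h2.2⟩,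
      zero_mem' := ⟨V.zero_mem, (TwoSidedIdeal.span (S ∪ φ '' S)).zero_mem⟩,
      smul_mem' := fun c x hx => by
        rw [Set.mem_setOf_eq, Algebra.smul_def]
        exact ⟨V.mul_mem_left _ _ hx.1,
          (TwoSidedIdeal.span (S ∪ φ '' S)).mul_mem_left _ _ hx.2⟩ }
  have hM𝒮 : M ∈ 𝒮 := by
    refine ⟨fun s hs => ⟨hS hs, TwoSidedIdeal.subset_span (Or.inl hs)⟩, ?_⟩
    rintro j ⟨hjV, hjI⟩ v hv
    exact ⟨⟨V.mul_mem_left _ _ hjV, (TwoSidedIdeal.span _).mul_mem_left _ _ hjI⟩,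
      ⟨V.mul_mem_right _ _ hjV, (TwoSidedIdeal.span _).mul_mem_right _ _ hjI⟩,
      ⟨V.mul_mem_right _ _ hv, (TwoSidedIdeal.span _).mul_mem_left _ _ (hφI j hjI)⟩,
      ⟨V.mul_mem_left _ _ hv, (TwoSidedIdeal.span _).mul_mem_right _ _ (hφI j hjI)⟩,
      ⟨V.mul_mem_left _ _ hjV, (TwoSidedIdeal.span _).mul_mem_left _ _ hjI⟩,
      ⟨V.mul_mem_right _ _ hjV, (TwoSidedIdeal.span _).mul_mem_right _ _ hjI⟩⟩
  -- conclude
  ext f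
  simp only [Set.mem_inter_iff, SetLike.mem_coe]
  constructor
  · intro hf
    exact Submodule.mem_sInf.1 hf _ hM𝒮
  · rintro ⟨h1, h2⟩
    exact hhard f h1 h2
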